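/- Let (Γ, T, n⊥, n, κ_g, τ_g) be a closed asymptotic curve in ℝ³ and let u be a unit vector such that ⟨u, n(t)⟩ ≠ 0 for all t. Then for every point p ∈ ℝ³ there exists t ∈ [0, 2π] with ⟨Γ(t) − p, T(t) × u⟩ = 0. (Equivalently: the tangent lines of the planar projection Γ_u cover the whole plane orthogonal to u, so Γ_u is not locally star-shaped with respect to any point. This is the embedded-graph case of Theorem 1.2/Kovaleva's theorem, proved via Petrunin's argument.) -/

import Mathlib

open Real intervalIntegral

noncomputable section

/-- The cross product on `EuclideanSpace ℝ (Fin 3)`. -/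
def cross3 (a b : EuclideanSpace ℝ (Fin 3)) : EuclideanSpace ℝ (Fin 3) :=
  (EuclideanSpace.equiv (Fin 3) ℝ).symm
    (crossProduct ((EuclideanSpace.equiv (Fin 3) ℝ) a) ((EuclideanSpace.equiv (Fin 3) ℝ) b))

lemma inner3 (x y : EuclideanSpace ℝ (Fin 3)) :
    (inner ℝ x y : ℝ) = x 0 * y 0 + x 1 * y 1 + x 2 * y 2 := by
  simp [PiLp.inner_apply, Fin.sum_univ_three, mul_comm]

lemma cross3_apply (a b : EuclideanSpace ℝ (Fin 3)) :
    cross3 a b 0 = a 1 * b 2 - a 2 * b 1 ∧ cross3 a b 1 = a 2 * b 0 - a 0 * b 2 ∧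
    cross3 a b 2 = a 0 * b 1 - a 1 * b 0 := by
  simp [cross3, crossProduct]

lemma key_ident (x u N T : EuclideanSpace ℝ (Fin 3))
    (hN : (inner ℝ N N : ℝ) = 1) (hNT : (inner ℝ N T : ℝ) = 0) :
    (inner ℝ x N : ℝ) * (inner ℝ u (cross3 N T) : ℝ)
      - (inner ℝ x (cross3 N T) : ℝ) * (inner ℝ u N : ℝ)
      = (inner ℝ x (cross3 T u) : ℝ) := by
  obtain ⟨h0, h1, h2⟩ := cross3_apply N T
  obtain ⟨k0, k1, k2⟩ := cross3_apply T u
  rw [inner3] at hN hNT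
  simp only [inner3, h0, h1, h2, k0, k1, k2]
  linear_combination (x 0 * (T 1 * u 2 - T 2 * u 1) + x 1 * (T 2 * u 0 - T 0 * u 2)
      + x 2 * (T 0 * u 1 - T 1 * u 0)) * hN
    - (x 0 * (N 1 * u 2 - N 2 * u 1) + x 1 * (N 2 * u 0 - N 0 * u 2)
      + x 2 * (N 0 * u 1 - N 1 * u 0)) * hNT

lemma continuous_cross3 {A B : ℝ → EuclideanSpace ℝ (Fin 3)}
    (hA : Continuous A) (hB : Continuous B) : Continuous fun t => cross3 (A t) (B t) := by
  have hAi : ∀ i, Continuous fun t => A t i := fun i =>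
    (continuous_apply i).comp ((EuclideanSpace.equiv (Fin 3) ℝ).continuous.comp hA)
  have hBi : ∀ i, Continuous fun t => B t i := fun i =>
    (continuous_apply i).comp ((EuclideanSpace.equiv (Fin 3) ℝ).continuous.comp hB)
  refine ((EuclideanSpace.equiv (Fin 3) ℝ).symm.continuous).comp ?_
  refine continuous_pi fun i => ?_
  fin_cases i <;> simp only [crossProduct, LinearMap.mk₂_apply, Matrix.cons_val_zero,
    Matrix.cons_val_one, Matrix.head_cons, Matrix.cons_val_two, Matrix.tail_cons]
  · exact ((hAi 1).mul (hBi 2)).sub ((hAi 2).mul (hBi 1))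
  · exact ((hAi 2).mul (hBi 0)).sub ((hAi 0).mul (hBi 2))
  · exact ((hAi 0).mul (hBi 1)).sub ((hAi 1).mul (hBi 0))

/-- Theorem 1.2 (embedded-graph case / Kovaleva): if `⟨u, n⟩` never vanishes, the tangent
lines of the projection `Γ_u` cover the whole plane, i.e. `Γ_u` is not locally star-shaped
with respect to any point. -/
theorem stmt0
    (Γ n : ℝ → EuclideanSpace ℝ (Fin 3)) (κg τg : ℝ → ℝ)
    (hΓ : ContDiff ℝ 2 Γ) (hΓper : Function.Periodic Γ (2 * π))
    (hT1 : ∀ t, ‖deriv Γ t‖ = 1)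
    (hn : ContDiff ℝ 1 n) (hnper : Function.Periodic n (2 * π))
    (hn1 : ∀ t, ‖n t‖ = 1)
    (hnT : ∀ t, (inner ℝ (n t) (deriv Γ t) : ℝ) = 0)
    (hκcont : Continuous κg) (hκper : Function.Periodic κg (2 * π))
    (hτcont : Continuous τg) (hτper : Function.Periodic τg (2 * π))
    (hτ : ∀ t, τg t ≠ 0)
    (hDarboux1 : ∀ t, deriv (deriv Γ) t = κg t • cross3 (n t) (deriv Γ t))
    (hDarboux2 : ∀ t, deriv (fun s => cross3 (n s) (deriv Γ s)) t
      = -κg t • deriv Γ t + τg t • n t)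
    (hDarboux3 : ∀ t, deriv n t = -τg t • cross3 (n t) (deriv Γ t))
    (u : EuclideanSpace ℝ (Fin 3)) (hu : ‖u‖ = 1)
    (hun : ∀ t, (inner ℝ u (n t) : ℝ) ≠ 0) :
    ∀ p : EuclideanSpace ℝ (Fin 3), ∃ t ∈ Set.Icc (0 : ℝ) (2 * π),
      (inner ℝ (Γ t - p) (cross3 (deriv Γ t) u) : ℝ) = 0 := by
  intro p
  by_contra hcon
  push_neg at hcon
  have hΓd : ∀ t, HasDerivAt Γ (deriv Γ t) t := fun t =>
    ((hΓ.differentiable two_ne_zero) t).hasDerivAt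
  have hnd : ∀ t, HasDerivAt n (-τg t • cross3 (n t) (deriv Γ t)) t := fun t => by
    rw [← hDarboux3 t]; exact ((hn.differentiable one_ne_zero) t).hasDerivAt
  set g : ℝ → ℝ := fun t => inner ℝ (Γ t - p) (n t) with hgdef
  set h : ℝ → ℝ := fun t => inner ℝ u (n t) with hhdef
  set F : ℝ → ℝ := fun t => inner ℝ (Γ t - p) (cross3 (deriv Γ t) u) with hFdef
  have hg : ∀ t, HasDerivAt g
      (-τg t * (inner ℝ (Γ t - p) (cross3 (n t) (deriv Γ t)) : ℝ)) t := fun t => by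
    have H := HasDerivAt.inner ℝ ((hΓd t).sub_const p) (hnd t)
    have h0 : (inner ℝ (deriv Γ t) (n t) : ℝ) = 0 := by
      rw [real_inner_comm]; exact hnT t
    refine H.congr_deriv ?_
    rw [real_inner_smul_right, h0]
    ring
  have hh : ∀ t, HasDerivAt h
      (-τg t * (inner ℝ u (cross3 (n t) (deriv Γ t)) : ℝ)) t := fun t => by
    have H := HasDerivAt.inner ℝ (hasDerivAt_const t u) (hnd t)
    refine H.congr_deriv ?_
    rw [real_inner_smul_right, inner_zero_left]
    ring
  have hq : ∀ t, HasDerivAt (fun s => g s / h s) (τg t * F t / (h t) ^ 2) t := fun t => by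
    have H := (hg t).div (hh t) (hun t)
    have hN : (inner ℝ (n t) (n t) : ℝ) = 1 := by
      rw [real_inner_self_eq_norm_mul_norm, hn1 t, one_mul]
    have hid := key_ident (Γ t - p) u (n t) (deriv Γ t) hN (hnT t)
    have hnum : -τg t * (inner ℝ (Γ t - p) (cross3 (n t) (deriv Γ t)) : ℝ) * h t
        - g t * (-τg t * (inner ℝ u (cross3 (n t) (deriv Γ t)) : ℝ)) = τg t * F t := by
      simp only [hgdef, hhdef, hFdef]
      linear_combination (τg t) * hid
    rw [hnum] at H
    exact H
  -- continuity of F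
  have hFc : Continuous F := by
    rw [hFdef]
    exact Continuous.inner (hΓ.continuous.sub continuous_const)
      (continuous_cross3 (hΓ.continuous_deriv one_le_two) continuous_const)
  have hπ : (0 : ℝ) < 2 * π := by linarith [Real.pi_pos]
  have h0mem : (0 : ℝ) ∈ Set.Icc (0 : ℝ) (2 * π) := ⟨le_refl 0, le_of_lt hπ⟩
  have h2mem : (2 * π) ∈ Set.Icc (0 : ℝ) (2 * π) := ⟨le_of_lt hπ, le_refl _⟩
  -- periodicity of the quotient
  have hqper : g (2 * π) / h (2 * π) = g 0 / h 0 := by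
    have e1 : Γ (2 * π) = Γ 0 := by simpa using hΓper 0
    have e2 : n (2 * π) = n 0 := by simpa using hnper 0
    rw [hgdef, hhdef]
    simp only [e1, e2]
  -- the sign function
  set φ : ℝ → ℝ := fun t => τg t * F t with hφdef
  have hφc : Continuous φ := hτcont.mul hFc
  have hφne : ∀ t ∈ Set.Icc (0 : ℝ) (2 * π), φ t ≠ 0 := fun t ht =>
    mul_ne_zero (hτ t) (hcon t ht)
  have hsq : ∀ t : ℝ, (0 : ℝ) < h t ^ 2 :=
    fun t => lt_of_le_of_ne (sq_nonneg _) (Ne.symm (pow_ne_zero 2 (hun t)))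
  have hcont : ContinuousOn (fun s => g s / h s) (Set.Icc (0 : ℝ) (2 * π)) :=
    fun t _ => ((hq t).differentiableAt.continuousAt).continuousWithinAt
  rcases lt_or_gt_of_ne (hφne 0 h0mem) with hneg | hpos
  · -- φ < 0 throughout, quotient strictly decreasing
    have hall : ∀ t ∈ Set.Icc (0 : ℝ) (2 * π), φ t < 0 := by
      intro t ht
      by_contra hle
      push_neg at hle
      have hlt : 0 < φ t := lt_of_le_of_ne hle (Ne.symm (hφne t ht))
      have hmem : (0 : ℝ) ∈ Set.uIcc (φ 0) (φ t) := by
        rw [Set.mem_uIcc]; left; exact ⟨le_of_lt hneg, le_of_lt hlt⟩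
      obtain ⟨c, hc, hc0⟩ := intermediate_value_uIcc (hφc.continuousOn) hmem
      rw [Set.uIcc_of_le ht.1] at hc
      exact hφne c ⟨hc.1, hc.2.trans ht.2⟩ hc0
    have hanti := strictAntiOn_of_deriv_neg (convex_Icc (0 : ℝ) (2 * π)) hcont
      (fun x hx => by
        rw [interior_Icc] at hx
        rw [(hq x).deriv]
        exact div_neg_of_neg_of_pos (hall x ⟨le_of_lt hx.1, le_of_lt hx.2⟩) (hsq x))
    have := hanti h0mem h2mem hπ
    exact (ne_of_lt this) hqper
  · have hall : ∀ t ∈ Set.Icc (0 : ℝ) (2 * π), 0 < φ t := by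
      intro t ht
      by_contra hle
      push_neg at hle
      have hlt : φ t < 0 := lt_of_le_of_ne hle (hφne t ht)
      have hmem : (0 : ℝ) ∈ Set.uIcc (φ 0) (φ t) := by
        rw [Set.mem_uIcc]; right; exact ⟨le_of_lt hlt, le_of_lt hpos⟩
      obtain ⟨c, hc, hc0⟩ := intermediate_value_uIcc (hφc.continuousOn) hmem
      rw [Set.uIcc_of_le ht.1] at hc
      exact hφne c ⟨hc.1, hc.2.trans ht.2⟩ hc0
    have hmono := strictMonoOn_of_deriv_pos (convex_Icc (0 : ℝ) (2 * π)) hcont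
      (fun x hx => by
        rw [interior_Icc] at hx
        rw [(hq x).deriv]
        exact div_pos (hall x ⟨le_of_lt hx.1, le_of_lt hx.2⟩) (hsq x))
    have := hmono h0mem h2mem hπ
    exact (ne_of_lt this) hqper.symm
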